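/- Fix nonnegative integers μ and r. Then for every integer i with 0 ≤ i ≤ r, one has binom(r,i) · ∑_{j=0}^{μ} binom(μ,j) · (j+r−i)! · (μ−j+i)! = (μ+r+1)! / (r+1). -/
import Mathlib

lemma key (μ : ℕ) : ∀ a b : ℕ,
    ((a + b + 1).factorial : ℚ) *
      ∑ j ∈ Finset.range (μ + 1),
        (μ.choose j : ℚ) * (j + a).factorial * ((μ - j) + b).factorial
    = (a.factorial : ℚ) * b.factorial * (μ + a + b + 1).factorial := by
  induction μ with
  | zero =>
    intro a b
    simp [Nat.factorial]
    ring
  | succ μ ih =>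
    intro a b
    have split :
        ∑ j ∈ Finset.range (μ + 2),
          ((μ+1).choose j : ℚ) * (j + a).factorial * ((μ + 1 - j) + b).factorial
        = (∑ j ∈ Finset.range (μ + 1),
            (μ.choose j : ℚ) * (j + (a+1)).factorial * ((μ - j) + b).factorial)
          + ∑ j ∈ Finset.range (μ + 1),
            (μ.choose j : ℚ) * (j + a).factorial * ((μ - j) + (b+1)).factorial := by
      rw [Finset.sum_range_succ' _ (μ+1)]
      have e1 : ∀ j ∈ Finset.range (μ + 1),
          ((μ+1).choose (j+1) : ℚ) * ((j+1) + a).factorial * ((μ + 1 - (j+1)) + b).factorial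
          = (μ.choose j : ℚ) * (j + (a+1)).factorial * ((μ - j) + b).factorial
            + (μ.choose (j+1) : ℚ) * ((j+1) + a).factorial * ((μ - (j+1)) + (b+1)).factorial := by
        intro j hj
        simp only [Finset.mem_range] at hj
        rw [Nat.choose_succ_succ]
        push_cast
        rcases Nat.lt_or_ge j μ with h | h
        · have h4 : j + 1 + a = j + (a + 1) := by omega
          have h5 : μ - j + b = μ - (j+1) + (b+1) := by omega
          rw [h4, h5]; ring
        · have hj' : j = μ := by omega
          subst hj'
          have h4 : j + 1 + a = j + (a + 1) := by omega
          rw [h4, Nat.choose_succ_self]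
          push_cast
          simp [Nat.sub_self]
      rw [Finset.sum_congr rfl e1, Finset.sum_add_distrib]
      rw [Finset.sum_range_succ' (fun j => (μ.choose j : ℚ) * (j + a).factorial * ((μ - j) + (b+1)).factorial) μ]
      rw [Finset.sum_range_succ (fun j => (μ.choose (j+1) : ℚ) * ((j+1) + a).factorial * ((μ - (j+1)) + (b+1)).factorial) μ]
      have h6 : μ + 1 - 0 + b = μ - 0 + (b + 1) := by omega
      rw [Nat.choose_succ_self, h6]
      simp
      ring
    rw [show μ + 1 + 1 = μ + 2 from rfl, split]
    have h1 := ih (a+1) b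
    have h2 := ih a (b+1)
    have e1 : a + 1 + b + 1 = a + b + 2 := by omega
    have e2 : a + (b+1) + 1 = a + b + 2 := by omega
    have e3 : μ + (a+1) + b + 1 = μ + a + b + 2 := by omega
    have e4 : μ + a + (b+1) + 1 = μ + a + b + 2 := by omega
    have e5 : μ + 1 + a + b + 1 = μ + a + b + 2 := by omega
    rw [e1, e3] at h1
    rw [e2, e4] at h2
    rw [e5]
    have fa : ((a+1).factorial : ℚ) = (a+1) * a.factorial := by
      rw [Nat.factorial_succ]; push_cast; ring
    have fb : ((b+1).factorial : ℚ) = (b+1) * b.factorial := by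
      rw [Nat.factorial_succ]; push_cast; ring
    have fab : ((a+b+2).factorial : ℚ) = ((a:ℚ)+b+2) * (a+b+1).factorial := by
      rw [show a+b+2 = (a+b+1)+1 from rfl, Nat.factorial_succ]; push_cast; ring
    rw [fab, fa] at h1
    rw [fab, fb] at h2
    have hne : ((a:ℚ) + b + 2) ≠ 0 := by positivity
    have : ((a:ℚ)+b+2) * ((a+b+1).factorial *
        ((∑ j ∈ Finset.range (μ + 1),
            (μ.choose j : ℚ) * (j + (a+1)).factorial * ((μ - j) + b).factorial)
          + ∑ j ∈ Finset.range (μ + 1),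
            (μ.choose j : ℚ) * (j + a).factorial * ((μ - j) + (b+1)).factorial))
        = ((a:ℚ)+b+2) * ((a.factorial : ℚ) * b.factorial * (μ + a + b + 2).factorial) := by
      linear_combination h1 + h2
    exact mul_left_cancel₀ hne this

theorem stmt_0 (μ r i : ℕ) (hi : i ≤ r) :
    (r.choose i : ℚ) *
      ∑ j ∈ Finset.range (μ + 1),
        (μ.choose j : ℚ) * (j + (r - i)).factorial * ((μ - j) + i).factorial
    = ((μ + r + 1).factorial : ℚ) / (r + 1) := by
  have hk := key μ (r - i) i
  have e1 : r - i + i + 1 = r + 1 := by omega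
  have e2 : μ + (r - i) + i + 1 = μ + r + 1 := by omega
  rw [e1, e2] at hk
  have hc : (r.choose i : ℚ) * i.factorial * (r - i).factorial = r.factorial := by
    exact_mod_cast congrArg (Nat.cast : ℕ → ℚ) (Nat.choose_mul_factorial_mul_factorial hi)
  have hf : ((r+1).factorial : ℚ) = ((r:ℚ)+1) * r.factorial := by
    rw [Nat.factorial_succ]; push_cast; ring
  rw [hf] at hk
  have hne : ((r:ℚ) + 1) ≠ 0 := by positivity
  have hfne : (r.factorial : ℚ) ≠ 0 := by
    exact_mod_cast Nat.cast_ne_zero.mpr (Nat.factorial_ne_zero r)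
  rw [eq_div_iff hne]
  have key2 : (r.factorial : ℚ) * ((r.choose i : ℚ) *
      (∑ j ∈ Finset.range (μ + 1),
        (μ.choose j : ℚ) * (j + (r - i)).factorial * ((μ - j) + i).factorial) * ((r:ℚ)+1))
      = r.factorial * ((μ + r + 1).factorial : ℚ) := by
    linear_combination ((r.choose i : ℚ)) * hk + (((μ + r + 1).factorial : ℚ)) * hc
  exact mul_left_cancel₀ hfne key2
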